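/- Let N ≥ 1 and let A, A' ⊆ [0,N-1]. If A and A' are homometric, then the two-part ordered partitions (A, A^c) and (A', A'^c) of [0,N-1] are homometric; that is, A − A = A' − A', A^c − A^c = A'^c − A'^c, and A − A^c = A' − A'^c as multisets. -/

import Mathlib

/-- The cyclic distance `d(i,j) = min(|i-j|, N-|i-j|)` on `ZMod N`. -/
def cdist {N : ℕ} (i j : ZMod N) : ℕ := min (i - j).val (j - i).val

/-- The cyclic difference multiset `A - B = {d(i,j) : i ∈ A, j ∈ B}`. -/
def diffMS {N : ℕ} (A B : Finset (ZMod N)) : Multiset ℕ :=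
  (A ×ˢ B).val.map fun p => cdist p.1 p.2

/-- The self difference multiset `A - A = {d(i,j) : i ≤ j ∈ A}`. -/
def selfDiffMS {N : ℕ} (A : Finset (ZMod N)) : Multiset ℕ :=
  ((A ×ˢ A).filter fun p => p.1.val ≤ p.2.val).val.map fun p => cdist p.1 p.2

/-- Two subsets are homometric if they have the same self difference multiset. -/
def Homometric {N : ℕ} (A B : Finset (ZMod N)) : Prop :=
  selfDiffMS A = selfDiffMS B

/-- `σ : ZMod N → ZMod N` is given by the action of an element of the dihedral
group `D_{2N}`, generated by the rotation `i ↦ i + 1` and the reflection `i ↦ -i`. -/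
def IsDihedral {N : ℕ} (σ : ZMod N → ZMod N) : Prop :=
  (∃ k : ZMod N, ∀ i, σ i = i + k) ∨ (∃ k : ZMod N, ∀ i, σ i = -i + k)

/-- Two subsets are equivalent if one is the image of the other under `D_{2N}`. -/
def EquivSets {N : ℕ} (A B : Finset (ZMod N)) : Prop :=
  ∃ σ : ZMod N → ZMod N, IsDihedral σ ∧ B = A.image σ

/-- An ordered partition of `[0, N-1]`: pairwise disjoint sets covering everything. -/
def IsPartitionOf {N K : ℕ} [NeZero N] (A : Fin K → Finset (ZMod N)) : Prop :=
  (∀ i j, i ≠ j → Disjoint (A i) (A j)) ∧ Finset.univ.biUnion A = Finset.univ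

/-- Two ordered partitions are homometric if `A i - A j = B i - B j` for all pairs. -/
def HomometricPart {N K : ℕ} (A B : Fin K → Finset (ZMod N)) : Prop :=
  ∀ i j, diffMS (A i) (A j) = diffMS (B i) (B j)

/-- Two ordered partitions are equivalent if a single dihedral element maps one to the other. -/
def EquivPart {N K : ℕ} (A B : Fin K → Finset (ZMod N)) : Prop :=
  ∃ σ : ZMod N → ZMod N, IsDihedral σ ∧ ∀ i, B i = (A i).image σ

/-- Two ordered partitions are pseudo-equivalent if each part is mapped by some
(possibly different) dihedral element. -/
def PseudoEquivPart {N K : ℕ} (A B : Fin K → Finset (ZMod N)) : Prop :=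
  ∀ i, ∃ σ : ZMod N → ZMod N, IsDihedral σ ∧ B i = (A i).image σ

/-- The periodic autocorrelation `a_x[ℓ] = ∑ x[n] x[n+ℓ]`. -/
noncomputable def autocorr {N : ℕ} [NeZero N] (x : ZMod N → ℝ) (ℓ : ZMod N) : ℝ :=
  ∑ n : ZMod N, x n * x (n + ℓ)

open Classical in
/-- The level set `{i : x[i] = a}` of a signal. -/
noncomputable def levelSet {N : ℕ} [NeZero N] (x : ZMod N → ℝ) (a : ℝ) : Finset (ZMod N) :=
  Finset.univ.filter fun i => x i = a

section Helpers
set_option linter.unusedSectionVars false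
variable {N : ℕ} [NeZero N]

lemma cdist_comm (i j : ZMod N) : cdist i j = cdist j i := min_comm _ _

lemma cdist_eq_zero_iff {i j : ZMod N} : cdist i j = 0 ↔ i = j := by
  constructor
  · intro h
    rcases Nat.min_eq_zero_iff.mp h with h' | h'
    · exact sub_eq_zero.mp ((ZMod.val_eq_zero _).mp h')
    · exact (sub_eq_zero.mp ((ZMod.val_eq_zero _).mp h')).symm
  · intro h; subst h; simp [cdist]

/-- number of pairs in `A × B` at distance `d` -/
def cnt (A B : Finset (ZMod N)) (d : ℕ) : ℕ :=
  ((A ×ˢ B).filter fun p => cdist p.1 p.2 = d).card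

def scnt (A : Finset (ZMod N)) (d : ℕ) : ℕ :=
  ((A ×ˢ A).filter fun p => p.1.val ≤ p.2.val ∧ cdist p.1 p.2 = d).card

lemma count_diffMS (A B : Finset (ZMod N)) (d : ℕ) :
    (diffMS A B).count d = cnt A B d := by
  rw [diffMS, Multiset.count_map, cnt, Finset.card_def, Finset.filter_val]
  congr 1
  exact Multiset.filter_congr fun a _ => eq_comm

lemma count_selfDiffMS (A : Finset (ZMod N)) (d : ℕ) :
    (selfDiffMS A).count d = scnt A d := by
  rw [selfDiffMS, Multiset.count_map, scnt, Finset.card_def, Finset.filter_val,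
    Finset.filter_val, Multiset.filter_filter]
  congr 1
  refine Multiset.filter_congr fun a _ => ?_
  constructor
  · rintro ⟨x, y⟩; exact ⟨y, x.symm⟩
  · rintro ⟨x, y⟩; exact ⟨y.symm, x⟩

end Helpers
section Helpers2
set_option linter.unusedSectionVars false
variable {N : ℕ} [NeZero N]

lemma cnt_comm (A B : Finset (ZMod N)) (d : ℕ) : cnt A B d = cnt B A d := by
  unfold cnt
  refine Finset.card_nbij' Prod.swap Prod.swap ?_ ?_ ?_ ?_ <;>
    intro p hp <;>
    simp only [Finset.mem_coe, Finset.mem_filter, Finset.mem_product, Prod.fst_swap, Prod.snd_swap,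
      Prod.swap_swap] at hp ⊢ <;>
    exact ⟨⟨hp.1.2, hp.1.1⟩, (cdist_comm _ _).trans hp.2⟩

lemma cdist_add (a j : ZMod N) : cdist a (j + a) = cdist 0 j := by
  unfold cdist
  rw [show a - (j + a) = 0 - j by ring, show j + a - a = j - 0 by ring]

lemma sec_card (a : ZMod N) (d : ℕ) :
    (Finset.univ.filter fun j : ZMod N => cdist a j = d).card =
      (Finset.univ.filter fun j : ZMod N => cdist 0 j = d).card := by
  refine Finset.card_nbij' (fun j => j - a) (fun j => j + a) ?_ ?_ ?_ ?_ <;>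
    intro j hj <;>
    simp only [Finset.mem_coe, Finset.mem_filter, Finset.mem_univ, true_and] at hj ⊢
  · have h := cdist_add a (j - a)
    rw [show j - a + a = j by ring] at h
    rw [← h]; exact hj
  · rw [cdist_add]; exact hj
  · ring
  · ring

lemma cnt_univ (A : Finset (ZMod N)) (d : ℕ) :
    cnt A Finset.univ d =
      A.card * (Finset.univ.filter fun j : ZMod N => cdist 0 j = d).card := by
  unfold cnt
  rw [Finset.card_eq_sum_card_fiberwise (f := Prod.fst) (t := A)
    (fun x hx => (Finset.mem_product.mp (Finset.mem_filter.mp hx).1).1)]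
  rw [show A.card * (Finset.univ.filter fun j : ZMod N => cdist 0 j = d).card
      = ∑ _a ∈ A, (Finset.univ.filter fun j : ZMod N => cdist 0 j = d).card by
    rw [Finset.sum_const, smul_eq_mul]]
  refine Finset.sum_congr rfl fun a ha => ?_
  rw [← sec_card a d]
  refine Finset.card_nbij' Prod.snd (fun b => (a, b)) ?_ ?_ ?_ ?_
  · intro p hp
    simp only [Finset.mem_coe, Finset.mem_filter, Finset.mem_product, Finset.mem_univ, true_and] at hp ⊢
    rw [← hp.2]; exact hp.1.2
  · intro b hb
    simp only [Finset.mem_coe, Finset.mem_filter, Finset.mem_product, Finset.mem_univ, true_and] at hb ⊢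
    exact ⟨⟨⟨ha, trivial⟩, hb⟩, trivial⟩
  · intro p hp
    simp only [Finset.mem_coe, Finset.mem_filter] at hp
    exact Prod.ext hp.2.symm rfl
  · intro b _; rfl

lemma cnt_union (A B C : Finset (ZMod N)) (hBC : Disjoint B C) (d : ℕ) :
    cnt A (B ∪ C) d = cnt A B d + cnt A C d := by
  unfold cnt
  rw [Finset.product_union, Finset.filter_union, Finset.card_union_of_disjoint]
  refine Finset.disjoint_filter_filter ?_
  rw [Finset.disjoint_left]
  intro p hp hp'
  exact (Finset.disjoint_left.mp hBC) (Finset.mem_product.mp hp).2 (Finset.mem_product.mp hp').2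

lemma cnt_zero (A : Finset (ZMod N)) : cnt A A 0 = A.card := by
  unfold cnt
  refine Finset.card_nbij' Prod.fst (fun a => (a, a)) ?_ ?_ ?_ ?_
  · intro p hp
    simp only [Finset.mem_coe, Finset.mem_filter, Finset.mem_product] at hp
    exact hp.1.1
  · intro a ha
    simp only [Finset.mem_coe, Finset.mem_filter, Finset.mem_product]
    exact ⟨⟨ha, ha⟩, cdist_eq_zero_iff.mpr rfl⟩
  · intro p hp
    simp only [Finset.mem_coe, Finset.mem_filter, Finset.mem_product] at hp
    exact Prod.ext rfl (cdist_eq_zero_iff.mp hp.2)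
  · intro a _; rfl

lemma scnt_zero (A : Finset (ZMod N)) : scnt A 0 = A.card := by
  unfold scnt
  refine Finset.card_nbij' Prod.fst (fun a => (a, a)) ?_ ?_ ?_ ?_
  · intro p hp
    simp only [Finset.mem_coe, Finset.mem_filter, Finset.mem_product] at hp
    exact hp.1.1
  · intro a ha
    simp only [Finset.mem_coe, Finset.mem_filter, Finset.mem_product]
    exact ⟨⟨ha, ha⟩, le_refl _, cdist_eq_zero_iff.mpr rfl⟩
  · intro p hp
    simp only [Finset.mem_coe, Finset.mem_filter, Finset.mem_product] at hp
    exact Prod.ext rfl (cdist_eq_zero_iff.mp hp.2.2)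
  · intro a _; rfl

lemma cnt_eq_two_mul_scnt (A : Finset (ZMod N)) (d : ℕ) (hd : d ≠ 0) :
    cnt A A d = 2 * scnt A d := by
  classical
  unfold cnt scnt
  set S := (A ×ˢ A).filter fun p => cdist p.1 p.2 = d with hS
  have hsplit := Finset.card_filter_add_card_filter_not
    (s := S) (p := fun p : ZMod N × ZMod N => p.1.val ≤ p.2.val)
  have h1 : S.filter (fun p => p.1.val ≤ p.2.val) =
      (A ×ˢ A).filter fun p => p.1.val ≤ p.2.val ∧ cdist p.1 p.2 = d := by
    rw [hS, Finset.filter_filter]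
    exact Finset.filter_congr fun p _ => and_comm
  have h2 : (S.filter fun p => ¬ p.1.val ≤ p.2.val).card =
      (S.filter fun p => p.1.val ≤ p.2.val).card := by
    refine Finset.card_nbij' Prod.swap Prod.swap ?_ ?_ ?_ ?_ <;>
      intro p hp <;>
      simp only [hS, Finset.mem_coe, Finset.mem_filter, Finset.mem_product, Prod.fst_swap, Prod.snd_swap,
        Prod.swap_swap] at hp ⊢
    · exact ⟨⟨⟨hp.1.1.2, hp.1.1.1⟩, (cdist_comm _ _).trans hp.1.2⟩, le_of_not_ge hp.2⟩
    · refine ⟨⟨⟨hp.1.1.2, hp.1.1.1⟩, (cdist_comm _ _).trans hp.1.2⟩, ?_⟩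
      intro hle
      have hne : p.1 ≠ p.2 := fun he => hd (by rw [← hp.1.2, he, cdist_eq_zero_iff.mpr rfl])
      exact hne (ZMod.val_injective N (le_antisymm hp.2 hle))
  rw [← h1]
  omega

end Helpers2
/-- homometric sets yield homometric two-part partitions. -/
theorem homometric_two_part_partitions (N : ℕ) [NeZero N] (A A' : Finset (ZMod N))
    (h : Homometric A A') :
    selfDiffMS A = selfDiffMS A' ∧ selfDiffMS Aᶜ = selfDiffMS A'ᶜ ∧
      diffMS A Aᶜ = diffMS A' A'ᶜ := by
  have hs : ∀ d, scnt A d = scnt A' d := fun d => by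
    rw [← count_selfDiffMS, ← count_selfDiffMS, h]
  have hcard : A.card = A'.card := by
    rw [← scnt_zero A, ← scnt_zero A', hs 0]
  have hAA : ∀ d, cnt A A d = cnt A' A' d := by
    intro d
    rcases eq_or_ne d 0 with rfl | hd
    · rw [cnt_zero, cnt_zero, hcard]
    · rw [cnt_eq_two_mul_scnt A d hd, cnt_eq_two_mul_scnt A' d hd, hs]
  have hAAc : ∀ d, cnt A Aᶜ d = cnt A' A'ᶜ d := by
    intro d
    have e1 : cnt A Finset.univ d = cnt A A d + cnt A Aᶜ d := by
      rw [← cnt_union A A Aᶜ disjoint_compl_right, Finset.union_compl]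
    have e2 : cnt A' Finset.univ d = cnt A' A' d + cnt A' A'ᶜ d := by
      rw [← cnt_union A' A' A'ᶜ disjoint_compl_right, Finset.union_compl]
    rw [cnt_univ, hcard, hAA d] at e1
    rw [cnt_univ] at e2
    omega
  have hcardc : Aᶜ.card = A'ᶜ.card := by
    rw [Finset.card_compl, Finset.card_compl, hcard]
  have hAcAc : ∀ d, cnt Aᶜ Aᶜ d = cnt A'ᶜ A'ᶜ d := by
    intro d
    have e1 : cnt Aᶜ Finset.univ d = cnt Aᶜ A d + cnt Aᶜ Aᶜ d := by
      rw [← cnt_union Aᶜ A Aᶜ disjoint_compl_right, Finset.union_compl]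
    have e2 : cnt A'ᶜ Finset.univ d = cnt A'ᶜ A' d + cnt A'ᶜ A'ᶜ d := by
      rw [← cnt_union A'ᶜ A' A'ᶜ disjoint_compl_right, Finset.union_compl]
    have e3 : cnt Aᶜ A d = cnt A'ᶜ A' d := by
      rw [cnt_comm, cnt_comm A'ᶜ, hAAc d]
    rw [cnt_univ, hcardc] at e1
    rw [cnt_univ] at e2
    omega
  have hsc : ∀ d, scnt Aᶜ d = scnt A'ᶜ d := by
    intro d
    rcases eq_or_ne d 0 with rfl | hd
    · rw [scnt_zero, scnt_zero, hcardc]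
    · have e := hAcAc d
      rw [cnt_eq_two_mul_scnt _ d hd, cnt_eq_two_mul_scnt _ d hd] at e
      omega
  refine ⟨h, ?_, ?_⟩
  · refine Multiset.ext.mpr fun d => ?_
    rw [count_selfDiffMS, count_selfDiffMS]
    exact hsc d
  · refine Multiset.ext.mpr fun d => ?_
    rw [count_diffMS, count_diffMS]
    exact hAAc d
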